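/- For every coset spectral system, the modulus-one constants of the three modular data satisfy C³ = Ċ³ · C̈³. -/

import Mathlib

open scoped BigOperators

/-- A modular datum `(I, S, ω, C)`: the genus-zero modular matrices data of §2.1. -/
structure ModularDatum (I : Type*) [Fintype I] [DecidableEq I] : Type _ where
  one : I
  bar : I → I
  bar_invol : Function.Involutive bar
  bar_one : bar one = one
  S : Matrix I I ℂ
  S_symm : ∀ i j, S i j = S j i
  S_unitary : S ∈ Matrix.unitaryGroup I ℂ
  S_one_im : ∀ i, (S one i).im = 0
  S_one_pos : ∀ i, 0 < (S one i).re
  ω : I → ℂ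
  ω_abs : ∀ i, ‖ω i‖ = 1
  ω_one : ω one = 1
  ω_bar : ∀ i, ω (bar i) = ω i
  C : ℂ
  C_abs : ‖C‖ = 1
  rel_STS : (S * Matrix.diagonal (fun i => C * ω i)) ^ 3 = S ^ 2
  rel_Ssq : ∀ i j, (S ^ 2) i j = if j = bar i then 1 else 0

namespace ModularDatum

variable {I : Type*} [Fintype I] [DecidableEq I] (D : ModularDatum I)

lemma conj_S_one (j : I) : starRingEnd ℂ (D.S D.one j) = D.S D.one j :=
  Complex.conj_eq_iff_im.2 (D.S_one_im j)

lemma S_one_ne (j : I) : D.S D.one j ≠ 0 := by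
  intro h
  have := D.S_one_pos j
  rw [h] at this
  simp at this

lemma ω_ne (i : I) : D.ω i ≠ 0 := by
  intro h
  have := D.ω_abs i
  rw [h] at this
  simp at this

lemma C_ne : D.C ≠ 0 := by
  intro h
  have := D.C_abs
  rw [h] at this
  simp at this

lemma conj_ω (i : I) : starRingEnd ℂ (D.ω i) = (D.ω i)⁻¹ :=
  (Complex.inv_eq_conj (D.ω_abs i)).symm

lemma conj_C : starRingEnd ℂ D.C = D.C⁻¹ :=
  (Complex.inv_eq_conj D.C_abs).symm

lemma bar_row (j k : I) : D.S (D.bar j) k = starRingEnd ℂ (D.S j k) := by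
  have hU : D.S * star D.S = 1 := (Matrix.mem_unitaryGroup_iff).1 D.S_unitary
  have h2 : D.S ^ 2 * star D.S = D.S := by
    rw [pow_two, Matrix.mul_assoc, hU, Matrix.mul_one]
  have h3 := congrFun (congrFun h2 j) k
  rw [Matrix.mul_apply] at h3
  simp only [D.rel_Ssq, ite_mul, one_mul, zero_mul] at h3
  rw [Finset.sum_ite_eq' Finset.univ (D.bar j)] at h3
  simp only [Finset.mem_univ, if_true, Matrix.star_apply] at h3
  -- h3 : star (D.S k (D.bar j)) = D.S j k
  have h4 := congrArg star h3
  rw [star_star] at h4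
  rw [D.S_symm, ← Complex.star_def]
  exact h4

lemma key (kk : I) :
    ∑ j, D.S D.one j * D.ω j * D.S j kk
      = D.C⁻¹ ^ 3 * (D.ω kk)⁻¹ * D.S D.one kk := by
  classical
  set S := D.S with hS
  set T : Matrix I I ℂ := Matrix.diagonal (fun i => D.C * D.ω i) with hT
  set T' : Matrix I I ℂ := Matrix.diagonal (fun i => (D.C * D.ω i)⁻¹) with hT'
  have hne : ∀ i, D.C * D.ω i ≠ 0 := fun i => mul_ne_zero D.C_ne (D.ω_ne i)
  have hTT' : T * T' = 1 := by
    rw [hT, hT', Matrix.diagonal_mul_diagonal]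
    have h1 : (fun i => (D.C * D.ω i) * (D.C * D.ω i)⁻¹) = fun _ : I => (1:ℂ) :=
      funext fun i => mul_inv_cancel₀ (hne i)
    rw [h1, Matrix.diagonal_one]
  have hT'T : T' * T = 1 := by
    rw [hT, hT', Matrix.diagonal_mul_diagonal]
    have h1 : (fun i => (D.C * D.ω i)⁻¹ * (D.C * D.ω i)) = fun _ : I => (1:ℂ) :=
      funext fun i => inv_mul_cancel₀ (hne i)
    rw [h1, Matrix.diagonal_one]
  have hU : star S * S = 1 := (Matrix.mem_unitaryGroup_iff').1 D.S_unitary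
  have h3 : S * (T * (S * (T * (S * T)))) = S * S := by
    have h := D.rel_STS
    rw [show (3:ℕ) = 2 + 1 from rfl, pow_succ, pow_two, pow_two] at h
    simpa only [Matrix.mul_assoc] using h
  have e1 : T * (S * (T * (S * T))) = S := by
    calc T * (S * (T * (S * T)))
        = (star S * S) * (T * (S * (T * (S * T)))) := by rw [hU, Matrix.one_mul]
      _ = star S * (S * (T * (S * (T * (S * T))))) := by simp only [Matrix.mul_assoc]
      _ = star S * (S * S) := by rw [h3]
      _ = (star S * S) * S := by simp only [Matrix.mul_assoc]
      _ = S := by rw [hU, Matrix.one_mul]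
  have e2' : S * (T * (S * T)) = T' * S := by
    calc S * (T * (S * T))
        = (T' * T) * (S * (T * (S * T))) := by rw [hT'T, Matrix.one_mul]
      _ = T' * (T * (S * (T * (S * T)))) := by simp only [Matrix.mul_assoc]
      _ = T' * S := by rw [e1]
  have e2 : S * (T * S) = T' * (S * T') := by
    calc S * (T * S)
        = S * (T * S) * (T * T') := by rw [hTT', Matrix.mul_one]
      _ = (S * (T * (S * T))) * T' := by simp only [Matrix.mul_assoc]
      _ = (T' * S) * T' := by rw [e2']
      _ = T' * (S * T') := by simp only [Matrix.mul_assoc]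
  have h5 : ∑ j, S D.one j * ((D.C * D.ω j) * S j kk)
      = (D.C * D.ω D.one)⁻¹ * (S D.one kk * (D.C * D.ω kk)⁻¹) := by
    have h := congrFun (congrFun e2 D.one) kk
    rw [hT, hT'] at h
    rw [Matrix.mul_apply] at h
    simp only [Matrix.diagonal_mul, Matrix.mul_diagonal] at h
    exact h
  rw [D.ω_one, mul_one] at h5
  have hC := D.C_ne
  have hω := D.ω_ne kk
  apply mul_left_cancel₀ hC
  calc D.C * ∑ j, S D.one j * D.ω j * S j kk
      = ∑ j, S D.one j * ((D.C * D.ω j) * S j kk) := by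
        rw [Finset.mul_sum]
        exact Finset.sum_congr rfl fun j _ => by ring
    _ = D.C⁻¹ * (S D.one kk * (D.C * D.ω kk)⁻¹) := h5
    _ = D.C * (D.C⁻¹ ^ 3 * (D.ω kk)⁻¹ * S D.one kk) := by
        field_simp

lemma S_one_bar (j : I) : D.S D.one (D.bar j) = D.S D.one j := by
  calc D.S D.one (D.bar j) = D.S (D.bar j) D.one := D.S_symm _ _
    _ = starRingEnd ℂ (D.S j D.one) := D.bar_row _ _
    _ = starRingEnd ℂ (D.S D.one j) := by rw [D.S_symm]
    _ = D.S D.one j := D.conj_S_one j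

lemma key_inv (kk : I) :
    ∑ j, D.S D.one j * (D.ω j)⁻¹ * D.S j kk
      = D.C ^ 3 * D.ω kk * D.S D.one kk := by
  have h := congrArg (starRingEnd ℂ) (D.key kk)
  rw [map_sum] at h
  simp only [map_mul, map_pow, map_inv₀, D.conj_ω, D.conj_C, D.conj_S_one, inv_inv] at h
  -- h : ∑ j, S1j * ωj⁻¹ * conj (S j kk) = C ^ 3 * ω kk * S1kk
  have hre : ∀ j : I, D.S D.one j * (D.ω j)⁻¹ * starRingEnd ℂ (D.S j kk)
      = D.S D.one j * (D.ω j)⁻¹ * D.S (D.bar j) kk := fun j => by rw [D.bar_row]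
  rw [Finset.sum_congr rfl fun j _ => hre j] at h
  -- reindex j ↦ bar j
  have hperm : ∑ j, D.S D.one j * (D.ω j)⁻¹ * D.S (D.bar j) kk
      = ∑ j, D.S D.one j * (D.ω j)⁻¹ * D.S j kk := by
    have := Equiv.sum_comp (Function.Involutive.toPerm D.bar D.bar_invol)
      (fun j => D.S D.one j * (D.ω j)⁻¹ * D.S j kk)
    rw [← this]
    refine Finset.sum_congr rfl fun j _ => ?_
    show D.S D.one j * (D.ω j)⁻¹ * D.S (D.bar j) kk
      = D.S D.one (D.bar j) * (D.ω (D.bar j))⁻¹ * D.S (D.bar j) kk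
    rw [D.ω_bar, D.S_one_bar]
  rw [hperm] at h
  exact h

lemma key_bar (kk : I) :
    ∑ j, D.S D.one j * D.ω j * D.S (D.bar j) kk
      = D.C⁻¹ ^ 3 * (D.ω kk)⁻¹ * D.S D.one kk := by
  have h := congrArg (starRingEnd ℂ) (D.key_inv kk)
  rw [map_sum] at h
  simp only [map_mul, map_pow, map_inv₀, D.conj_ω, D.conj_C, D.conj_S_one, inv_inv] at h
  -- h : ∑ j, S1j * ωj * conj (S j kk) = C⁻¹ ^ 3 * (ω kk)⁻¹ * S1kk
  have hgoal : ∀ j : I, D.S D.one j * D.ω j * D.S (D.bar j) kk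
      = D.S D.one j * D.ω j * starRingEnd ℂ (D.S j kk) := fun j => by rw [D.bar_row]
  exact (Finset.sum_congr rfl fun j _ => hgoal j).trans h

end ModularDatum
private lemma quad_factor {J B Y E : Type*} [Fintype J] [Fintype B] [Fintype Y] [Fintype E]
    (F : J → E → ℂ) (G : B → E → ℂ) (H : Y → E → ℂ) (q : E → ℂ) :
    (∑ j, ∑ β, ∑ y, ∑ e, F j e * G β e * H y e * q e)
      = ∑ e, (∑ j, F j e) * (∑ β, G β e) * (∑ y, H y e) * q e := by
  calc (∑ j, ∑ β, ∑ y, ∑ e, F j e * G β e * H y e * q e)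
      = ∑ j, ∑ β, ∑ e, ∑ y, F j e * G β e * H y e * q e := by
        refine Finset.sum_congr rfl fun j _ => Finset.sum_congr rfl fun β _ => ?_
        rw [Finset.sum_comm]
    _ = ∑ j, ∑ e, ∑ β, ∑ y, F j e * G β e * H y e * q e := by
        refine Finset.sum_congr rfl fun j _ => ?_
        rw [Finset.sum_comm]
    _ = ∑ e, ∑ j, ∑ β, ∑ y, F j e * G β e * H y e * q e := by
        rw [Finset.sum_comm]
    _ = ∑ e, (∑ j, F j e) * (∑ β, G β e) * (∑ y, H y e) * q e := by
        refine Finset.sum_congr rfl fun e _ => ?_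
        rw [Finset.sum_mul_sum, Finset.sum_mul, Finset.sum_mul]
        refine Finset.sum_congr rfl fun j _ => ?_
        rw [Finset.sum_mul, Finset.sum_mul]
        refine Finset.sum_congr rfl fun β _ => ?_
        rw [mul_comm (F j e * G β e) (∑ y, H y e), Finset.sum_mul, Finset.sum_mul]
        refine Finset.sum_congr rfl fun y _ => ?_
        ring

/-- A coset spectral system: three modular data `(I,S,ω,C)`, `(A,Ṡ,ω̇,Ċ)`, `(X,S̈,ω̈,C̈)`,
a nonnegative function `M` on `I × A × X` with `M(1,1,1) = 1`, and a finite spectral index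
set `E` with maps `k, δ, ζ` and nonnegative weights `p`, satisfying the conclusions (a)–(d)
of Lemma A of §3.1 of the paper. -/
structure CosetSpectralSystem (I A X E : Type*)
    [Fintype I] [DecidableEq I] [Fintype A] [DecidableEq A]
    [Fintype X] [DecidableEq X] [Fintype E] : Type _ where
  G : ModularDatum I
  H : ModularDatum A
  Q : ModularDatum X
  M : I → A → X → ℝ
  M_nonneg : ∀ i α x, 0 ≤ M i α x
  M_vac : M G.one H.one Q.one = 1
  k : E → I
  δ : E → A
  ζ : E → X
  p : E → ℝ
  p_nonneg : ∀ e, 0 ≤ p e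
  spec : ∀ i α x, (M i α x : ℂ) =
    ∑ e, (G.S (G.bar i) (k e) / G.S G.one (k e)) *
         (H.S α (δ e) / H.S H.one (δ e)) *
         (Q.S x (ζ e) / Q.S Q.one (ζ e)) * (p e : ℂ)
  vac_node : ∃ e₀, k e₀ = G.one ∧ δ e₀ = H.one ∧ ζ e₀ = Q.one ∧ 0 < p e₀
  phase : ∀ j β y, M j β y ≠ 0 → Q.ω y = G.ω j * (H.ω β)⁻¹
  norm_one : ∑ j, ∑ β, ∑ y,
    G.S G.one j * star (H.S H.one β) * star (Q.S Q.one y) * (M j β y : ℂ) = 1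

/-- For every coset spectral system, `C³ = Ċ³·C̈³` (the central charge
relation of Proposition 3.1). -/
theorem cosetSpectralSystem_central_charge {I A X E : Type*}
    [Fintype I] [DecidableEq I] [Fintype A] [DecidableEq A]
    [Fintype X] [DecidableEq X] [Fintype E]
    (𝒮 : CosetSpectralSystem I A X E) :
    𝒮.G.C ^ 3 = 𝒮.H.C ^ 3 * 𝒮.Q.C ^ 3 := by
  classical
  obtain ⟨e₀, hk0, hδ0, hζ0, hp0⟩ := 𝒮.vac_node
  -- Step 1: the phase-twisted normalization sum also equals 1
  have hA1 : (∑ j, ∑ β, ∑ y, 𝒮.G.S 𝒮.G.one j * 𝒮.H.S 𝒮.H.one β * 𝒮.Q.S 𝒮.Q.one y *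
      (𝒮.G.ω j * (𝒮.H.ω β)⁻¹ * (𝒮.Q.ω y)⁻¹) * (𝒮.M j β y : ℂ)) = 1 := by
    rw [← 𝒮.norm_one]
    refine Finset.sum_congr rfl fun j _ => Finset.sum_congr rfl fun β _ =>
      Finset.sum_congr rfl fun y _ => ?_
    by_cases hM : 𝒮.M j β y = 0
    · rw [hM]
      push_cast
      ring
    · have hph := 𝒮.phase j β y hM
      rw [hph]
      have h1 : 𝒮.G.ω j * (𝒮.H.ω β)⁻¹ * (𝒮.G.ω j * (𝒮.H.ω β)⁻¹)⁻¹ = 1 :=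
        mul_inv_cancel₀ (mul_ne_zero (𝒮.G.ω_ne j) (inv_ne_zero (𝒮.H.ω_ne β)))
      rw [h1]
      simp only [Complex.star_def, 𝒮.H.conj_S_one, 𝒮.Q.conj_S_one]
      ring
  -- Step 2: evaluate the same sum spectrally
  have hA2 : (∑ j, ∑ β, ∑ y, 𝒮.G.S 𝒮.G.one j * 𝒮.H.S 𝒮.H.one β * 𝒮.Q.S 𝒮.Q.one y *
      (𝒮.G.ω j * (𝒮.H.ω β)⁻¹ * (𝒮.Q.ω y)⁻¹) * (𝒮.M j β y : ℂ))
      = ∑ e, (𝒮.G.C⁻¹ ^ 3 * (𝒮.G.ω (𝒮.k e))⁻¹) * (𝒮.H.C ^ 3 * 𝒮.H.ω (𝒮.δ e)) *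
          (𝒮.Q.C ^ 3 * 𝒮.Q.ω (𝒮.ζ e)) * (𝒮.p e : ℂ) := by
    calc (∑ j, ∑ β, ∑ y, 𝒮.G.S 𝒮.G.one j * 𝒮.H.S 𝒮.H.one β * 𝒮.Q.S 𝒮.Q.one y *
        (𝒮.G.ω j * (𝒮.H.ω β)⁻¹ * (𝒮.Q.ω y)⁻¹) * (𝒮.M j β y : ℂ))
        = ∑ j, ∑ β, ∑ y, ∑ e,
            (𝒮.G.S 𝒮.G.one j * 𝒮.G.ω j * (𝒮.G.S (𝒮.G.bar j) (𝒮.k e) / 𝒮.G.S 𝒮.G.one (𝒮.k e)))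
          * (𝒮.H.S 𝒮.H.one β * (𝒮.H.ω β)⁻¹ * (𝒮.H.S β (𝒮.δ e) / 𝒮.H.S 𝒮.H.one (𝒮.δ e)))
          * (𝒮.Q.S 𝒮.Q.one y * (𝒮.Q.ω y)⁻¹ * (𝒮.Q.S y (𝒮.ζ e) / 𝒮.Q.S 𝒮.Q.one (𝒮.ζ e)))
          * (𝒮.p e : ℂ) := by
          refine Finset.sum_congr rfl fun j _ => Finset.sum_congr rfl fun β _ =>
            Finset.sum_congr rfl fun y _ => ?_
          rw [𝒮.spec j β y, Finset.mul_sum]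
          exact Finset.sum_congr rfl fun e _ => by ring
      _ = ∑ e, (∑ j, 𝒮.G.S 𝒮.G.one j * 𝒮.G.ω j * (𝒮.G.S (𝒮.G.bar j) (𝒮.k e) / 𝒮.G.S 𝒮.G.one (𝒮.k e)))
            * (∑ β, 𝒮.H.S 𝒮.H.one β * (𝒮.H.ω β)⁻¹ * (𝒮.H.S β (𝒮.δ e) / 𝒮.H.S 𝒮.H.one (𝒮.δ e)))
            * (∑ y, 𝒮.Q.S 𝒮.Q.one y * (𝒮.Q.ω y)⁻¹ * (𝒮.Q.S y (𝒮.ζ e) / 𝒮.Q.S 𝒮.Q.one (𝒮.ζ e)))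
            * (𝒮.p e : ℂ) := quad_factor _ _ _ _
      _ = ∑ e, (𝒮.G.C⁻¹ ^ 3 * (𝒮.G.ω (𝒮.k e))⁻¹) * (𝒮.H.C ^ 3 * 𝒮.H.ω (𝒮.δ e)) *
            (𝒮.Q.C ^ 3 * 𝒮.Q.ω (𝒮.ζ e)) * (𝒮.p e : ℂ) := by
          refine Finset.sum_congr rfl fun e _ => ?_
          have hG : (∑ j, 𝒮.G.S 𝒮.G.one j * 𝒮.G.ω j *
              (𝒮.G.S (𝒮.G.bar j) (𝒮.k e) / 𝒮.G.S 𝒮.G.one (𝒮.k e)))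
              = 𝒮.G.C⁻¹ ^ 3 * (𝒮.G.ω (𝒮.k e))⁻¹ := by
            calc (∑ j, 𝒮.G.S 𝒮.G.one j * 𝒮.G.ω j *
                (𝒮.G.S (𝒮.G.bar j) (𝒮.k e) / 𝒮.G.S 𝒮.G.one (𝒮.k e)))
                = (∑ j, 𝒮.G.S 𝒮.G.one j * 𝒮.G.ω j * 𝒮.G.S (𝒮.G.bar j) (𝒮.k e))
                    / 𝒮.G.S 𝒮.G.one (𝒮.k e) := by
                  rw [Finset.sum_div]
                  exact Finset.sum_congr rfl fun j _ => (mul_div_assoc _ _ _).symm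
              _ = 𝒮.G.C⁻¹ ^ 3 * (𝒮.G.ω (𝒮.k e))⁻¹ := by
                  rw [𝒮.G.key_bar, mul_div_assoc, div_self (𝒮.G.S_one_ne _), mul_one]
          have hH : (∑ β, 𝒮.H.S 𝒮.H.one β * (𝒮.H.ω β)⁻¹ *
              (𝒮.H.S β (𝒮.δ e) / 𝒮.H.S 𝒮.H.one (𝒮.δ e)))
              = 𝒮.H.C ^ 3 * 𝒮.H.ω (𝒮.δ e) := by
            calc (∑ β, 𝒮.H.S 𝒮.H.one β * (𝒮.H.ω β)⁻¹ *
                (𝒮.H.S β (𝒮.δ e) / 𝒮.H.S 𝒮.H.one (𝒮.δ e)))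
                = (∑ β, 𝒮.H.S 𝒮.H.one β * (𝒮.H.ω β)⁻¹ * 𝒮.H.S β (𝒮.δ e))
                    / 𝒮.H.S 𝒮.H.one (𝒮.δ e) := by
                  rw [Finset.sum_div]
                  exact Finset.sum_congr rfl fun β _ => (mul_div_assoc _ _ _).symm
              _ = 𝒮.H.C ^ 3 * 𝒮.H.ω (𝒮.δ e) := by
                  rw [𝒮.H.key_inv, mul_div_assoc, div_self (𝒮.H.S_one_ne _), mul_one]
          have hQ : (∑ y, 𝒮.Q.S 𝒮.Q.one y * (𝒮.Q.ω y)⁻¹ *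
              (𝒮.Q.S y (𝒮.ζ e) / 𝒮.Q.S 𝒮.Q.one (𝒮.ζ e)))
              = 𝒮.Q.C ^ 3 * 𝒮.Q.ω (𝒮.ζ e) := by
            calc (∑ y, 𝒮.Q.S 𝒮.Q.one y * (𝒮.Q.ω y)⁻¹ *
                (𝒮.Q.S y (𝒮.ζ e) / 𝒮.Q.S 𝒮.Q.one (𝒮.ζ e)))
                = (∑ y, 𝒮.Q.S 𝒮.Q.one y * (𝒮.Q.ω y)⁻¹ * 𝒮.Q.S y (𝒮.ζ e))
                    / 𝒮.Q.S 𝒮.Q.one (𝒮.ζ e) := by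
                  rw [Finset.sum_div]
                  exact Finset.sum_congr rfl fun y _ => (mul_div_assoc _ _ _).symm
              _ = 𝒮.Q.C ^ 3 * 𝒮.Q.ω (𝒮.ζ e) := by
                  rw [𝒮.Q.key_inv, mul_div_assoc, div_self (𝒮.Q.S_one_ne _), mul_one]
          rw [hG, hH, hQ]
  -- combine
  set u : E → ℂ := fun e => (𝒮.G.ω (𝒮.k e))⁻¹ * (𝒮.H.ω (𝒮.δ e) * 𝒮.Q.ω (𝒮.ζ e)) with hu
  set s : ℂ := ∑ e, (𝒮.p e : ℂ) * u e with hs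
  set κ : ℂ := 𝒮.G.C⁻¹ ^ 3 * (𝒮.H.C ^ 3 * 𝒮.Q.C ^ 3) with hκ
  have hκs : κ * s = 1 := by
    rw [hs, Finset.mul_sum, ← hA1, hA2]
    refine Finset.sum_congr rfl fun e _ => ?_
    rw [hκ, hu]
    ring
  have hu_abs : ∀ e, ‖u e‖ = 1 := by
    intro e
    rw [hu]
    simp only [norm_mul, norm_inv, 𝒮.G.ω_abs, 𝒮.H.ω_abs, 𝒮.Q.ω_abs]
    norm_num
  have hκ_abs : ‖κ‖ = 1 := by
    rw [hκ]
    simp only [norm_mul, norm_pow, norm_inv, 𝒮.G.C_abs, 𝒮.H.C_abs, 𝒮.Q.C_abs]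
    norm_num
  have hs_abs : ‖s‖ = 1 := by
    have h := congrArg (‖·‖) hκs
    rw [norm_mul, hκ_abs, one_mul, norm_one] at h
    exact h
  -- sum of weights is 1
  have hp_sum : ∑ e, 𝒮.p e = 1 := by
    have h := 𝒮.spec 𝒮.G.one 𝒮.H.one 𝒮.Q.one
    rw [𝒮.M_vac] at h
    have h2 : ∀ e : E, (𝒮.G.S (𝒮.G.bar 𝒮.G.one) (𝒮.k e) / 𝒮.G.S 𝒮.G.one (𝒮.k e)) *
        (𝒮.H.S 𝒮.H.one (𝒮.δ e) / 𝒮.H.S 𝒮.H.one (𝒮.δ e)) *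
        (𝒮.Q.S 𝒮.Q.one (𝒮.ζ e) / 𝒮.Q.S 𝒮.Q.one (𝒮.ζ e)) * (𝒮.p e : ℂ) = (𝒮.p e : ℂ) := by
      intro e
      rw [𝒮.G.bar_one, div_self (𝒮.G.S_one_ne _), div_self (𝒮.H.S_one_ne _),
        div_self (𝒮.Q.S_one_ne _)]
      ring
    rw [Finset.sum_congr rfl fun e _ => h2 e] at h
    have h3 : ((∑ e, 𝒮.p e : ℝ) : ℂ) = ((1:ℝ) : ℂ) := by
      push_cast
      rw [← h]
      norm_num
    exact_mod_cast h3
  -- equality case of the triangle inequality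
  have hsum_re : ∑ e, 𝒮.p e * (starRingEnd ℂ s * u e).re = 1 := by
    have h1 : ∀ e : E, 𝒮.p e * (starRingEnd ℂ s * u e).re
        = (starRingEnd ℂ s * ((𝒮.p e : ℂ) * u e)).re := by
      intro e
      rw [show starRingEnd ℂ s * ((𝒮.p e : ℂ) * u e)
          = (𝒮.p e : ℂ) * (starRingEnd ℂ s * u e) from by ring]
      simp [Complex.mul_re]
    rw [Finset.sum_congr rfl fun e _ => h1 e, ← Complex.re_sum, ← Finset.mul_sum, ← hs,
      mul_comm, Complex.mul_conj]
    rw [Complex.normSq_eq_norm_sq, hs_abs]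
    norm_num
  have hzero : ∑ e, 𝒮.p e * (1 - (starRingEnd ℂ s * u e).re) = 0 := by
    simp only [mul_sub, mul_one]
    rw [Finset.sum_sub_distrib, hp_sum, hsum_re, sub_self]
  have hnn : ∀ e ∈ Finset.univ, (0:ℝ) ≤ 𝒮.p e * (1 - (starRingEnd ℂ s * u e).re) := by
    intro e _
    apply mul_nonneg (𝒮.p_nonneg e)
    have h1 : (starRingEnd ℂ s * u e).re ≤ ‖starRingEnd ℂ s * u e‖ :=
      Complex.re_le_norm _
    have h2 : ‖starRingEnd ℂ s * u e‖ = 1 := by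
      rw [norm_mul, Complex.norm_conj, hs_abs, hu_abs, one_mul]
    linarith
  have hterm0 := (Finset.sum_eq_zero_iff_of_nonneg hnn).1 hzero e₀ (Finset.mem_univ _)
  have hu0 : u e₀ = 1 := by
    rw [hu]
    simp [hk0, hδ0, hζ0, 𝒮.G.ω_one, 𝒮.H.ω_one, 𝒮.Q.ω_one]
  rw [hu0, mul_one] at hterm0
  have hsre : s.re = 1 := by
    rcases mul_eq_zero.1 hterm0 with h | h
    · exact absurd h (ne_of_gt hp0)
    · have := Complex.conj_re s
      have h' : (starRingEnd ℂ s).re = 1 := by linarith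
      rw [Complex.conj_re] at h'
      exact h'
  have hs1 : s = 1 := by
    have hnsq : s.re * s.re + s.im * s.im = 1 := by
      have h := Complex.normSq_eq_norm_sq s
      rw [hs_abs] at h
      have := Complex.normSq_apply s
      nlinarith [h, this]
    have him : s.im = 0 := by nlinarith [sq_nonneg s.im]
    apply Complex.ext <;> simp [hsre, him]
  rw [hs1, mul_one] at hκs
  -- conclude
  have hCne : 𝒮.G.C ≠ 0 := 𝒮.G.C_ne
  have h := hκs
  rw [hκ] at h
  field_simp at h
  exact h.symm
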